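/- arXiv:2310.09280 — 2 statements merged into one kernel-verified Lean document; each statement's English description precedes it below -/
import Mathlib

section
/- For the metric D(x,y) = ∫₀^π d_I(⟨x,u_θ⟩, ⟨y,u_θ⟩) dθ on the open unit disk: if x, y, z ∈ D² and y lies on the Euclidean segment [x,z], then D(x,z) = D(x,y) + D(y,z). -/
open Real MeasureTheory Set

/-- f(t) = t/(1-|t|) -/
noncomputable def f (t : ℝ) : ℝ := t / (1 - |t|)

/-- d_I(s,t) = |f(s) - f(t)| -/
noncomputable def dI (s t : ℝ) : ℝ := |f s - f t|

/-- the unit direction u_θ = (cos θ, sin θ) -/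
noncomputable def u (θ : ℝ) : EuclideanSpace ℝ (Fin 2) := WithLp.toLp 2 ![Real.cos θ, Real.sin θ]

/-- D(x,y) = ∫₀^π d_I(⟨x,u_θ⟩, ⟨y,u_θ⟩) dθ -/
noncomputable def Dmet (x y : EuclideanSpace ℝ (Fin 2)) : ℝ :=
  ∫ θ in (0:ℝ)..π, dI (inner ℝ x (u θ) : ℝ) (inner ℝ y (u θ) : ℝ)

lemma norm_u (θ : ℝ) : ‖u θ‖ = 1 := by
  rw [EuclideanSpace.norm_eq]
  simp [u, Fin.sum_univ_two, sq_abs]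

lemma inner_lt_one {x : EuclideanSpace ℝ (Fin 2)} (hx : ‖x‖ < 1) (θ : ℝ) :
    |(inner ℝ x (u θ) : ℝ)| < 1 := by
  calc |(inner ℝ x (u θ) : ℝ)| ≤ ‖x‖ * ‖u θ‖ := abs_real_inner_le_norm x (u θ)
    _ = ‖x‖ := by rw [norm_u, mul_one]
    _ < 1 := hx

lemma f_le_f {s t : ℝ} (hs : |s| < 1) (ht : |t| < 1) (hst : s ≤ t) : f s ≤ f t := by
  have hs' : 0 < 1 - |s| := by linarith
  have ht' : 0 < 1 - |t| := by linarith
  rw [f, f, div_le_div_iff₀ hs' ht']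
  rcases abs_cases s with ⟨h1, h2⟩ <;> rcases abs_cases t with ⟨h3, h4⟩ <;> nlinarith

lemma dI_add {a b c : ℝ} (ha : |a| < 1) (hb : |b| < 1) (hc : |c| < 1)
    (h1 : min a c ≤ b) (h2 : b ≤ max a c) : dI a c = dI a b + dI b c := by
  rcases le_total a c with h | h
  · have hab : a ≤ b := by simpa [min_eq_left h] using h1
    have hbc : b ≤ c := by simpa [max_eq_right h] using h2
    have f1 := f_le_f ha hb hab
    have f2 := f_le_f hb hc hbc
    rw [dI, dI, dI, abs_of_nonpos (by linarith), abs_of_nonpos (by linarith),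
      abs_of_nonpos (by linarith)]
    ring
  · have hcb : c ≤ b := by simpa [min_eq_right h] using h1
    have hba : b ≤ a := by simpa [max_eq_left h] using h2
    have f1 := f_le_f hc hb hcb
    have f2 := f_le_f hb ha hba
    rw [dI, dI, dI, abs_of_nonneg (by linarith), abs_of_nonneg (by linarith),
      abs_of_nonneg (by linarith)]
    ring

lemma cont_inner (x : EuclideanSpace ℝ (Fin 2)) :
    Continuous (fun θ => (inner ℝ x (u θ) : ℝ)) := by
  have : (fun θ => (inner ℝ x (u θ) : ℝ)) = fun θ => x 0 * Real.cos θ + x 1 * Real.sin θ := by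
    funext θ
    simp [u, PiLp.inner_apply, Fin.sum_univ_two, RCLike.inner_apply, mul_comm]
  rw [this]; fun_prop

lemma cont_f_inner {x : EuclideanSpace ℝ (Fin 2)} (hx : ‖x‖ < 1) :
    Continuous (fun θ => f (inner ℝ x (u θ) : ℝ)) := by
  have hg := cont_inner x
  simp only [f]
  apply hg.div (by fun_prop)
  intro θ
  have := inner_lt_one hx θ
  have h0 : 0 < 1 - |(inner ℝ x (u θ) : ℝ)| := by linarith
  exact ne_of_gt h0

theorem Dmet_additive_on_segment (x y z : EuclideanSpace ℝ (Fin 2))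
    (hx : ‖x‖ < 1) (hy : ‖y‖ < 1) (hz : ‖z‖ < 1)
    (hseg : ∃ lam ∈ Icc (0:ℝ) 1, y = (1 - lam) • x + lam • z) :
    Dmet x z = Dmet x y + Dmet y z := by
  obtain ⟨l, ⟨hl0, hl1⟩, hyeq⟩ := hseg
  have hpt : ∀ θ : ℝ, dI (inner ℝ x (u θ) : ℝ) (inner ℝ z (u θ) : ℝ)
      = dI (inner ℝ x (u θ) : ℝ) (inner ℝ y (u θ) : ℝ)
      + dI (inner ℝ y (u θ) : ℝ) (inner ℝ z (u θ) : ℝ) := by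
    intro θ
    set a : ℝ := inner ℝ x (u θ)
    set c : ℝ := inner ℝ z (u θ)
    have hb : (inner ℝ y (u θ) : ℝ) = (1 - l) * a + l * c := by
      rw [hyeq, inner_add_left, real_inner_smul_left, real_inner_smul_left]
    apply dI_add (inner_lt_one hx θ) (inner_lt_one hy θ) (inner_lt_one hz θ)
    · rw [hb]
      rcases le_total a c with h | h
      · rw [min_eq_left h]; nlinarith
      · rw [min_eq_right h]; nlinarith
    · rw [hb]
      rcases le_total a c with h | h
      · rw [max_eq_right h]; nlinarith
      · rw [max_eq_left h]; nlinarith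
  have cont : ∀ (w v : EuclideanSpace ℝ (Fin 2)), ‖w‖ < 1 → ‖v‖ < 1 →
      Continuous (fun θ => dI (inner ℝ w (u θ) : ℝ) (inner ℝ v (u θ) : ℝ)) := by
    intro w v hw hv
    simp only [dI]
    exact ((cont_f_inner hw).sub (cont_f_inner hv)).abs
  have i1 : IntervalIntegrable _ volume (0:ℝ) π := (cont x y hx hy).intervalIntegrable (0:ℝ) π
  have i2 : IntervalIntegrable _ volume (0:ℝ) π := (cont y z hy hz).intervalIntegrable (0:ℝ) π
  rw [Dmet, Dmet, Dmet, ← intervalIntegral.integral_add i1 i2]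
  exact intervalIntegral.integral_congr (fun θ _ => hpt θ)
end

section
/- For every ξ on the unit circle, the integral ∫₀^π d_I(0, ⟨ξ, u_θ⟩) dθ = ∫₀^π [1/(1-|cos(θ - θ_ξ)|) - 1] dθ diverges, where θ_ξ is the angle of ξ. Consequently, every Euclidean radius of the unit disk has infinite length in the metric D. -/
open Real MeasureTheory Set

lemma inner_u (θξ θ : ℝ) : (inner ℝ (u θξ) (u θ) : ℝ) = Real.cos (θ - θξ) := by
  rw [show θ - θξ = -(θξ - θ) by ring, Real.cos_neg, Real.cos_sub]
  simp [u, PiLp.inner_apply, Fin.sum_univ_two]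
  ring

lemma key_ineq {y : ℝ} (hy0 : y ≠ 0) (hy1 : |y| < 1) :
    1 / |y| ≤ Real.cos y / (1 - Real.cos y) ∧ 1 / 2 ≤ Real.cos y ∧ Real.cos y < 1 := by
  have hlb : 1 - y ^ 2 / 2 ≤ Real.cos y := Real.one_sub_sq_div_two_le_cos
  have hsq : y ^ 2 < 1 := by
    have := sq_abs y; nlinarith [abs_nonneg y]
  have hc2 : 1 / 2 ≤ Real.cos y := by nlinarith
  have hlt : Real.cos y < 1 := by
    rcases lt_or_eq_of_le (Real.cos_le_one y) with h | h
    · exact h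
    · exfalso
      have h3 : (3:ℝ) < π := Real.pi_gt_three
      exact hy0 ((Real.cos_eq_one_iff_of_lt_of_lt (x := y)
        (by cases abs_lt.1 hy1; linarith) (by cases abs_lt.1 hy1; linarith)).1 h)
  have hpos : 0 < 1 - Real.cos y := by linarith
  refine ⟨?_, hc2, hlt⟩
  rw [div_le_div_iff₀ (abs_pos.2 hy0) hpos]
  have h1 : 1 - Real.cos y ≤ y ^ 2 / 2 := by linarith
  have h2 : y ^ 2 = |y| ^ 2 := (sq_abs y).symm
  nlinarith [abs_nonneg y, abs_pos.2 hy0]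

/-- |cos (x - θξ)| = |cos (x - c)| where c = θξ - ⌊θξ/π⌋π. -/
lemma abs_cos_shift (θξ x : ℝ) :
    |Real.cos (x - θξ)| = |Real.cos (x - (θξ - (⌊θξ / π⌋ : ℝ) * π))| := by
  have : x - θξ = (x - (θξ - (⌊θξ / π⌋ : ℝ) * π)) - (⌊θξ / π⌋ : ℝ) * π := by ring
  have h1 : |((-1:ℝ)) ^ ⌊θξ / π⌋| = 1 := by
    rcases Int.even_or_odd ⌊θξ / π⌋ with he | ho
    · rw [he.neg_one_zpow]; norm_num
    · rw [ho.neg_one_zpow]; norm_num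
  rw [this, Real.cos_sub_int_mul_pi, abs_mul, h1, one_mul]

/-- Main auxiliary lemma: any function agreeing with |cos(x-θξ)|/(1-|cos(x-θξ)|) near the
singular point is not interval integrable on [0, π]. -/
lemma aux_not_integrable (θξ : ℝ) {F : ℝ → ℝ}
    (h : ∀ x, x ≠ θξ - (⌊θξ / π⌋ : ℝ) * π → |x - (θξ - (⌊θξ / π⌋ : ℝ) * π)| < 1 →
      F x = |Real.cos (x - θξ)| / (1 - |Real.cos (x - θξ)|)) :
    ¬ IntervalIntegrable F volume 0 π := by
  set c : ℝ := θξ - (⌊θξ / π⌋ : ℝ) * π with hc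
  have hπ : 0 < π := Real.pi_pos
  have hceq : c = π * Int.fract (θξ / π) := by
    rw [hc, Int.fract]; field_simp
  have hc0 : 0 ≤ c := by
    have := Int.fract_nonneg (θξ / π); rw [hceq]; positivity
  have hcπ : c < π := by
    have := Int.fract_lt_one (θξ / π); rw [hceq]; nlinarith
  have hmem : c ∈ uIcc (0:ℝ) π := by
    rw [uIcc_of_le hπ.le]; exact ⟨hc0, hcπ.le⟩
  refine not_intervalIntegrable_of_sub_inv_isBigO_punctured ?_ hπ.ne hmem
  rw [Asymptotics.isBigO_iff]
  refine ⟨1, ?_⟩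
  filter_upwards [(eventually_abs_sub_lt c one_pos).filter_mono nhdsWithin_le_nhds,
    self_mem_nhdsWithin] with x hx1 hxc
  have hy0 : x - c ≠ 0 := sub_ne_zero.2 hxc
  obtain ⟨hK, hc2, hlt⟩ := key_ineq hy0 hx1
  have habs : |Real.cos (x - θξ)| = Real.cos (x - c) := by
    rw [abs_cos_shift θξ x, ← hc, abs_of_pos (by linarith)]
  have hFx : F x = Real.cos (x - c) / (1 - Real.cos (x - c)) := by
    rw [h x hxc hx1, habs]
  have hFpos : 0 ≤ F x := by
    rw [hFx]; apply div_nonneg (by linarith) (by linarith)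
  rw [Real.norm_eq_abs, Real.norm_eq_abs, abs_inv, abs_of_nonneg hFpos, one_mul, hFx]
  calc |x - c|⁻¹ = 1 / |x - c| := (one_div _).symm
    _ ≤ _ := hK

theorem radius_has_infinite_length (θξ : ℝ) :
    ¬ IntervalIntegrable (fun θ => dI 0 (inner ℝ (u θξ) (u θ) : ℝ)) volume 0 π ∧
    ¬ IntervalIntegrable (fun θ => 1 / (1 - |Real.cos (θ - θξ)|) - 1) volume 0 π := by
  constructor
  · apply aux_not_integrable θξ
    intro x hxc hx1
    have hy0 : x - (θξ - (⌊θξ / π⌋ : ℝ) * π) ≠ 0 := sub_ne_zero.2 hxc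
    obtain ⟨_, hc2, hlt⟩ := key_ineq hy0 hx1
    have habs : |Real.cos (x - θξ)| = Real.cos (x - (θξ - (⌊θξ / π⌋ : ℝ) * π)) := by
      rw [abs_cos_shift θξ x, abs_of_pos (by linarith)]
    have hlt1 : |Real.cos (x - θξ)| < 1 := by rw [habs]; exact hlt
    rw [inner_u, dI, f, f]
    simp only [abs_zero, sub_zero, div_one, zero_sub, abs_neg, abs_div]
    rw [abs_of_pos (by linarith : (0:ℝ) < 1 - |Real.cos (x - θξ)|)]
  · apply aux_not_integrable θξ
    intro x hxc hx1
    have hy0 : x - (θξ - (⌊θξ / π⌋ : ℝ) * π) ≠ 0 := sub_ne_zero.2 hxc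
    obtain ⟨_, hc2, hlt⟩ := key_ineq hy0 hx1
    have habs : |Real.cos (x - θξ)| = Real.cos (x - (θξ - (⌊θξ / π⌋ : ℝ) * π)) := by
      rw [abs_cos_shift θξ x, abs_of_pos (by linarith)]
    have hlt1 : |Real.cos (x - θξ)| < 1 := by rw [habs]; exact hlt
    have hne : (1 : ℝ) - |Real.cos (x - θξ)| ≠ 0 :=
      ne_of_gt (by linarith : (0:ℝ) < 1 - |Real.cos (x - θξ)|)
    field_simp
    ring
end
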